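/- Let C be a non-decomposable contingency table with normalized table C_nor = D_row^{-1/2} C D_col^{-1/2}, and let R_1,…,R_k and C_1,…,C_k be any proper k-partitions of the rows and columns of C. With R the block matrix of the relative densities ρ(R_a,C_b) and F = C − D_row R D_col, one has s_k ≤ ‖D_row^{-1/2} F D_col^{-1/2}‖, where s_k is the (k+1)-th largest singular value of C_nor (counting the trivial s_0 = 1) and ‖·‖ is the spectral norm. -/

import Mathlib

open scoped BigOperators Matrix

namespace Stmt17

variable {m n : ℕ}

/-- Row sums `d_{row,i}` of the table `C`. -/
noncomputable def rowSum (C : Matrix (Fin m) (Fin n) ℝ) (i : Fin m) : ℝ := ∑ j, C i j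

/-- Column sums `d_{col,j}` of the table `C`. -/
noncomputable def colSum (C : Matrix (Fin m) (Fin n) ℝ) (j : Fin n) : ℝ := ∑ i, C i j

/-- The cut `c(X,Y)` between a row-subset `X` and a column-subset `Y`. -/
noncomputable def cut (C : Matrix (Fin m) (Fin n) ℝ) (X : Finset (Fin m))
    (Y : Finset (Fin n)) : ℝ := ∑ i ∈ X, ∑ j ∈ Y, C i j

/-- The volume `Vol(X)` of a row-subset. -/
noncomputable def volRow (C : Matrix (Fin m) (Fin n) ℝ) (X : Finset (Fin m)) : ℝ :=
  ∑ i ∈ X, rowSum C i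

/-- The volume `Vol(Y)` of a column-subset. -/
noncomputable def volCol (C : Matrix (Fin m) (Fin n) ℝ) (Y : Finset (Fin n)) : ℝ :=
  ∑ j ∈ Y, colSum C j

/-- The relative density `ρ(R_a, C_b)`. -/
noncomputable def rho (C : Matrix (Fin m) (Fin n) ℝ) (RA : Finset (Fin m))
    (CB : Finset (Fin n)) : ℝ :=
  cut C RA CB / (volRow C RA * volCol C CB)

/-- A proper `k`-partition: nonempty parts, pairwise disjoint, covering everything. -/
def IsProperPartition {N k : ℕ} (P : Fin k → Finset (Fin N)) : Prop :=
  (∀ a, (P a).Nonempty) ∧ (∀ a b, a ≠ b → Disjoint (P a) (P b)) ∧ (∀ i, ∃ a, i ∈ P a)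

/-- The discrepancy `disc(C; R_1,…,R_k, C_1,…,C_k)` of `C` in the given
proper `k`-partitions of its rows and columns. -/
noncomputable def discPart {k : ℕ} (C : Matrix (Fin m) (Fin n) ℝ)
    (R : Fin k → Finset (Fin m)) (Cc : Fin k → Finset (Fin n)) : ℝ :=
  sSup {t : ℝ | ∃ (a b : Fin k) (X : Finset (Fin m)) (Y : Finset (Fin n)),
    X ⊆ R a ∧ Y ⊆ Cc b ∧
    t = |cut C X Y - rho C (R a) (Cc b) * volRow C X * volCol C Y| /
        Real.sqrt (volRow C X * volCol C Y)}

/-- The minimum `k`-way discrepancy `disc_k(C)`. -/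
noncomputable def disck (C : Matrix (Fin m) (Fin n) ℝ) (k : ℕ) : ℝ :=
  sInf {t : ℝ | ∃ (R : Fin k → Finset (Fin m)) (Cc : Fin k → Finset (Fin n)),
    IsProperPartition R ∧ IsProperPartition Cc ∧ t = discPart C R Cc}

/-- The normalized table `C_nor = D_row^{-1/2} C D_col^{-1/2}`. -/
noncomputable def Cnor (C : Matrix (Fin m) (Fin n) ℝ) : Matrix (Fin m) (Fin n) ℝ :=
  Matrix.diagonal (fun i => (Real.sqrt (rowSum C i))⁻¹) * C *
    Matrix.diagonal (fun j => (Real.sqrt (colSum C j))⁻¹)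

/-- The (unsorted) singular values of a matrix, i.e. the square roots of the
eigenvalues of `Aᴴ A`. -/
noncomputable def svFin (A : Matrix (Fin m) (Fin n) ℝ) : Fin n → ℝ :=
  fun i => Real.sqrt ((Matrix.isHermitian_conjTranspose_mul_self A).eigenvalues i)

/-- `sval A k` is the `(k+1)`-th largest singular value of `A`
(0-indexed: `sval A 0` is the largest); it is `0` when `k ≥ n`. -/
noncomputable def sval (A : Matrix (Fin m) (Fin n) ℝ) (k : ℕ) : ℝ :=
  if h : k < n then svFin A (Tuple.sort (svFin A) (Fin.rev ⟨k, h⟩)) else 0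

/-- Irreducibility of a (nonnegative) square matrix. -/
def MatIrreducible {N : ℕ} (M : Matrix (Fin N) (Fin N) ℝ) : Prop :=
  ∀ i j, ∃ t : ℕ, 1 ≤ t ∧ 0 < (M ^ t) i j

/-- The block matrix `R` whose entries over the block `R_a × C_b` all equal
`ρ(R_a, C_b)`. -/
noncomputable def Rblk {k : ℕ} (C : Matrix (Fin m) (Fin n) ℝ)
    (R : Fin k → Finset (Fin m)) (Cc : Fin k → Finset (Fin n)) :
    Matrix (Fin m) (Fin n) ℝ :=
  Matrix.of fun i j => ∑ a, ∑ b,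
    if i ∈ R a ∧ j ∈ Cc b then rho C (R a) (Cc b) else 0

/-- The deviation matrix `F = C - D_row R D_col`. -/
noncomputable def Fmat {k : ℕ} (C : Matrix (Fin m) (Fin n) ℝ)
    (R : Fin k → Finset (Fin m)) (Cc : Fin k → Finset (Fin n)) :
    Matrix (Fin m) (Fin n) ℝ :=
  C - Matrix.diagonal (rowSum C) * Rblk C R Cc * Matrix.diagonal (colSum C)

/-- The Euclidean norm of a real vector. -/
noncomputable def enormR {N : ℕ} (v : Fin N → ℝ) : ℝ := Real.sqrt (∑ i, v i ^ 2)

/-- The spectral norm of a real matrix: the supremum of `‖A v‖` over unit vectors. -/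
noncomputable def specNormR {M N : ℕ} (A : Matrix (Fin M) (Fin N) ℝ) : ℝ :=
  sSup {t : ℝ | ∃ v : Fin N → ℝ, enormR v = 1 ∧ t = enormR (A.mulVec v)}


lemma enormR_nonneg {N : ℕ} (v : Fin N → ℝ) : 0 ≤ enormR v := Real.sqrt_nonneg _

lemma enormR_sq {N : ℕ} (v : Fin N → ℝ) : enormR v ^ 2 = ∑ i, v i ^ 2 := by
  rw [enormR, Real.sq_sqrt]; positivity

lemma specNormR_bddAbove {M N : ℕ} (A : Matrix (Fin M) (Fin N) ℝ) :
    BddAbove {t : ℝ | ∃ v : Fin N → ℝ, enormR v = 1 ∧ t = enormR (A.mulVec v)} := by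
  refine ⟨Real.sqrt (∑ i, ∑ j, A i j ^ 2), ?_⟩
  rintro t ⟨v, hv, rfl⟩
  rw [enormR]
  apply Real.sqrt_le_sqrt
  have hv2 : ∑ j, v j ^ 2 = 1 := by
    have h := enormR_sq v; rw [hv] at h; simpa using h.symm
  calc ∑ i, (A.mulVec v) i ^ 2 ≤ ∑ i, ((∑ j, A i j ^ 2) * ∑ j, v j ^ 2) := by
        refine Finset.sum_le_sum fun i _ => ?_
        have h := Finset.sum_mul_sq_le_sq_mul_sq Finset.univ (fun j => A i j) v
        simpa [Matrix.mulVec, dotProduct, sq] using h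
    _ = ∑ i, ∑ j, A i j ^ 2 := by simp [hv2]

lemma le_specNormR {M N : ℕ} (A : Matrix (Fin M) (Fin N) ℝ) {v : Fin N → ℝ}
    (hv : enormR v = 1) : enormR (A.mulVec v) ≤ specNormR A :=
  le_csSup (specNormR_bddAbove A) ⟨v, hv, rfl⟩

lemma specNormR_nonneg {M N : ℕ} (A : Matrix (Fin M) (Fin N) ℝ) : 0 ≤ specNormR A := by
  by_cases hS : {t : ℝ | ∃ v : Fin N → ℝ, enormR v = 1 ∧ t = enormR (A.mulVec v)}.Nonempty
  · obtain ⟨t, v, hv, rfl⟩ := hS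
    exact le_trans (enormR_nonneg _) (le_specNormR A hv)
  · rw [specNormR, Set.not_nonempty_iff_eq_empty.mp hS, Real.sSup_empty]

/-- For a non-decomposable contingency table `C` and any proper `k`-partitions
`R_1,…,R_k` of its rows and `C_1,…,C_k` of its columns, with
`F = C - D_row R D_col`, one has `s_k ≤ ‖D_row^{-1/2} F D_col^{-1/2}‖`,
where `s_k` is the `(k+1)`-th largest singular value of `C_nor`
(counting the trivial `s_0 = 1`) and `‖·‖` is the spectral norm. -/
theorem sk_le_spectral_norm_of_deviation
    (C : Matrix (Fin m) (Fin n) ℝ)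
    (hnonneg : ∀ i j, 0 ≤ C i j)
    (hsum : ∑ i, ∑ j, C i j = 1)
    (hirr : if m ≤ n then MatIrreducible (C * Cᵀ) else MatIrreducible (Cᵀ * C))
    {k : ℕ}
    (R : Fin k → Finset (Fin m)) (Cc : Fin k → Finset (Fin n))
    (hR : IsProperPartition R) (hCc : IsProperPartition Cc) :
    sval (Cnor C) k ≤
      specNormR (Matrix.diagonal (fun i => (Real.sqrt (rowSum C i))⁻¹) *
        Fmat C R Cc *
        Matrix.diagonal (fun j => (Real.sqrt (colSum C j))⁻¹)) := by
  classical
  by_cases hk : k < n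
  · -- main case
    set A := Cnor C with hAdef
    set G := Matrix.diagonal (fun i => (Real.sqrt (rowSum C i))⁻¹) * Fmat C R Cc *
        Matrix.diagonal (fun j => (Real.sqrt (colSum C j))⁻¹) with hGdef
    have hM := Matrix.isHermitian_conjTranspose_mul_self A
    set μ : Fin n → ℝ := hM.eigenvalues with hmu
    set ev : Fin n → Fin n → ℝ := fun i0 => fun jj => hM.eigenvectorBasis i0 jj with hev
    -- the k+1 indices of the top singular values
    set idx : Fin (k+1) → Fin n := fun i =>
      Tuple.sort (svFin A) (Fin.rev ⟨(i : ℕ), lt_of_le_of_lt (Nat.lt_succ_iff.mp i.2) hk⟩)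
      with hidx
    have hidxinj : Function.Injective idx := by
      intro a b hab
      have h1 := (Tuple.sort (svFin A)).injective hab
      have h2 := Fin.rev_injective h1
      exact Fin.ext (by simpa using congrArg Fin.val h2)
    -- the k linear constraints
    set q : Fin k → Fin n → ℝ := fun a j =>
      (∑ b, if j ∈ Cc b then rho C (R a) (Cc b) else 0) *
        (colSum C j * (Real.sqrt (colSum C j))⁻¹) with hq
    set p : Fin k → Fin m → ℝ := fun a i =>
      if i ∈ R a then (Real.sqrt (rowSum C i))⁻¹ * rowSum C i else 0 with hp
    -- entrywise formula for G
    have hRb : ∀ i j, Rblk C R Cc i j =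
        ∑ a, (if i ∈ R a then (1:ℝ) else 0) *
          (∑ b, if j ∈ Cc b then rho C (R a) (Cc b) else 0) := by
      intro i j
      simp only [Rblk, Matrix.of_apply]
      refine Finset.sum_congr rfl fun a _ => ?_
      rw [Finset.mul_sum]
      refine Finset.sum_congr rfl fun b _ => ?_
      by_cases h1 : i ∈ R a <;> by_cases h2 : j ∈ Cc b <;> simp [h1, h2]
    have hG : ∀ i j, G i j = A i j - ∑ a, p a i * q a j := by
      intro i j
      have e1 : G i j = (Real.sqrt (rowSum C i))⁻¹ *
          (C i j - rowSum C i * Rblk C R Cc i j * colSum C j) *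
          (Real.sqrt (colSum C j))⁻¹ := by
        simp [hGdef, Fmat, Matrix.mul_diagonal, Matrix.diagonal_mul, Matrix.sub_apply,
          mul_assoc]
      have e2 : A i j = (Real.sqrt (rowSum C i))⁻¹ * C i j * (Real.sqrt (colSum C j))⁻¹ := by
        simp [hAdef, Cnor, Matrix.mul_diagonal, Matrix.diagonal_mul]
      have e4 : (Real.sqrt (rowSum C i))⁻¹ *
          (rowSum C i * Rblk C R Cc i j * colSum C j) * (Real.sqrt (colSum C j))⁻¹ =
          ∑ a, p a i * q a j := by
        rw [hRb i j, Finset.mul_sum, Finset.sum_mul, Finset.mul_sum, Finset.sum_mul]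
        refine Finset.sum_congr rfl fun a _ => ?_
        by_cases h1 : i ∈ R a
        · simp only [hp, hq, h1, if_true]; ring
        · simp only [hp, hq, h1, if_false]; ring
      rw [e1, e2, ← e4]
      ring
    -- eigen facts
    have hμ0 : ∀ i0, 0 ≤ μ i0 := fun i0 =>
      Matrix.eigenvalues_conjTranspose_mul_self_nonneg A i0
    have hsv : ∀ i0 : Fin n, svFin A i0 = Real.sqrt (μ i0) := fun _ => rfl
    have hortho : ∀ i1 i2 : Fin n, ∑ jj, ev i1 jj * ev i2 jj = if i1 = i2 then 1 else 0 := by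
      intro i1 i2
      have h := hM.eigenvectorBasis.orthonormal
      rw [orthonormal_iff_ite] at h
      have h2 := h i1 i2
      simpa [hev, PiLp.inner_apply, RCLike.inner_apply, starRingEnd_apply, star_trivial, mul_comm]
        using h2
    have heig : ∀ i0 : Fin n, ∀ jj, (∑ l, (Aᵀ * A) jj l * ev i0 l) = μ i0 * ev i0 jj := by
      intro i0 jj
      have h := hM.mulVec_eigenvectorBasis i0
      have h2 := congrFun h jj
      simpa [hev, hmu, Matrix.mulVec, dotProduct] using h2
    -- kernel vector
    have hLnotinj : ¬ Function.Injective
        ((Matrix.of fun (a : Fin k) (i : Fin (k+1)) =>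
          ∑ j, q a j * ev (idx i) j).mulVecLin) := by
      intro hinj
      have h := LinearMap.finrank_le_finrank_of_injective hinj
      simp only [Module.finrank_fin_fun] at h
      omega
    obtain ⟨x, y, hxy, hne⟩ := Function.not_injective_iff.mp hLnotinj
    set c : Fin (k+1) → ℝ := x - y with hc
    have hc0 : c ≠ 0 := sub_ne_zero.mpr hne
    have hcL : ∀ a, ∑ i, (∑ j, q a j * ev (idx i) j) * c i = 0 := by
      intro a
      have h : (Matrix.of fun (a : Fin k) (i : Fin (k+1)) =>
          ∑ j, q a j * ev (idx i) j).mulVecLin (x - y) = 0 := by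
        rw [map_sub, hxy, sub_self]
      have h2 := congrFun h a
      simpa [hc, Matrix.mulVecLin_apply, Matrix.mulVec, dotProduct] using h2
    set v : Fin n → ℝ := fun jj => ∑ i, c i * ev (idx i) jj with hv
    -- v satisfies the constraints
    have hqv : ∀ a, ∑ j, q a j * v j = 0 := by
      intro a
      calc ∑ j, q a j * v j = ∑ j, ∑ i, q a j * (c i * ev (idx i) j) := by
            refine Finset.sum_congr rfl fun j _ => ?_
            rw [hv, Finset.mul_sum]
        _ = ∑ i, ∑ j, q a j * (c i * ev (idx i) j) := Finset.sum_comm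
        _ = ∑ i, (∑ j, q a j * ev (idx i) j) * c i := by
            refine Finset.sum_congr rfl fun i _ => ?_
            rw [Finset.sum_mul]
            refine Finset.sum_congr rfl fun j _ => by ring
        _ = 0 := hcL a
    -- inner products of v with the chosen eigenvectors
    have hce : ∀ i1 : Fin (k+1), ∑ jj, v jj * ev (idx i1) jj = c i1 := by
      intro i1
      calc ∑ jj, v jj * ev (idx i1) jj
          = ∑ jj, ∑ i, c i * (ev (idx i) jj * ev (idx i1) jj) := by
            refine Finset.sum_congr rfl fun jj _ => ?_
            rw [hv, Finset.sum_mul]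
            refine Finset.sum_congr rfl fun i _ => by ring
        _ = ∑ i, c i * ∑ jj, ev (idx i) jj * ev (idx i1) jj := by
            rw [Finset.sum_comm]
            exact Finset.sum_congr rfl fun i _ => (Finset.mul_sum _ _ _).symm
        _ = ∑ i, if i = i1 then c i else 0 := by
            refine Finset.sum_congr rfl fun i _ => ?_
            rw [hortho]
            by_cases h : i = i1
            · simp [h, hidxinj.eq_iff]
            · have : idx i ≠ idx i1 := fun hcon => h (hidxinj hcon)
              simp [h, this]
        _ = c i1 := by simp
    have hv2 : ∑ jj, v jj ^ 2 = ∑ i, c i ^ 2 := by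
      calc ∑ jj, v jj ^ 2 = ∑ jj, ∑ i, c i * (v jj * ev (idx i) jj) := by
            refine Finset.sum_congr rfl fun jj _ => ?_
            rw [sq]
            conv_lhs => rw [hv]
            rw [Finset.sum_mul]
            refine Finset.sum_congr rfl fun i _ => by ring
        _ = ∑ i, c i * ∑ jj, v jj * ev (idx i) jj := by
            rw [Finset.sum_comm]
            exact Finset.sum_congr rfl fun i _ => (Finset.mul_sum _ _ _).symm
        _ = ∑ i, c i ^ 2 := by
            refine Finset.sum_congr rfl fun i _ => ?_
            rw [hce, sq]
    have hcpos : 0 < ∑ i, c i ^ 2 := by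
      obtain ⟨i0, hi0⟩ := Function.ne_iff.mp hc0
      refine Finset.sum_pos' (fun i _ => sq_nonneg _) ⟨i0, Finset.mem_univ _, ?_⟩
      have : c i0 ≠ 0 := hi0
      positivity
    -- quadratic form
    have hMv : ∀ jj, ((Aᵀ * A) *ᵥ v) jj = ∑ i, c i * (μ (idx i) * ev (idx i) jj) := by
      intro jj
      calc ((Aᵀ * A) *ᵥ v) jj = ∑ l, (Aᵀ * A) jj l * v l := by
            simp [Matrix.mulVec, dotProduct]
        _ = ∑ l, ∑ i, c i * ((Aᵀ * A) jj l * ev (idx i) l) := by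
            refine Finset.sum_congr rfl fun l _ => ?_
            rw [hv, Finset.mul_sum]
            refine Finset.sum_congr rfl fun i _ => by ring
        _ = ∑ i, c i * ∑ l, (Aᵀ * A) jj l * ev (idx i) l := by
            rw [Finset.sum_comm]
            exact Finset.sum_congr rfl fun i _ => (Finset.mul_sum _ _ _).symm
        _ = ∑ i, c i * (μ (idx i) * ev (idx i) jj) := by
            refine Finset.sum_congr rfl fun i _ => ?_
            rw [heig]
    have hvMv : v ⬝ᵥ ((Aᵀ * A) *ᵥ v) = ∑ i, c i ^ 2 * μ (idx i) := by
      calc v ⬝ᵥ ((Aᵀ * A) *ᵥ v) = ∑ jj, v jj * ∑ i, c i * (μ (idx i) * ev (idx i) jj) := by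
            simp only [dotProduct]
            exact Finset.sum_congr rfl fun jj _ => by rw [hMv]
        _ = ∑ jj, ∑ i, (c i * μ (idx i)) * (v jj * ev (idx i) jj) := by
            refine Finset.sum_congr rfl fun jj _ => ?_
            rw [Finset.mul_sum]
            refine Finset.sum_congr rfl fun i _ => by ring
        _ = ∑ i, (c i * μ (idx i)) * ∑ jj, v jj * ev (idx i) jj := by
            rw [Finset.sum_comm]
            exact Finset.sum_congr rfl fun i _ => (Finset.mul_sum _ _ _).symm
        _ = ∑ i, c i ^ 2 * μ (idx i) := by
            refine Finset.sum_congr rfl fun i _ => ?_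
            rw [hce, sq]; ring
    -- lower bound on the eigenvalues
    have hs0 : 0 ≤ sval A k := by
      rw [sval, dif_pos hk]; exact Real.sqrt_nonneg _
    have hμlow : ∀ i : Fin (k+1), sval A k ^ 2 ≤ μ (idx i) := by
      intro i
      have hle : Fin.rev (⟨k, hk⟩ : Fin n) ≤
          Fin.rev ⟨(i : ℕ), lt_of_le_of_lt (Nat.lt_succ_iff.mp i.2) hk⟩ := by
        rw [Fin.rev_le_rev]
        exact Nat.lt_succ_iff.mp i.2
      have hmon := Tuple.monotone_sort (svFin A) hle
      have h1 : sval A k ≤ svFin A (idx i) := by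
        rw [sval, dif_pos hk]
        simpa [Function.comp, hidx] using hmon
      have h2 : svFin A (idx i) ^ 2 = μ (idx i) := by
        rw [hsv, Real.sq_sqrt (hμ0 _)]
      nlinarith [Real.sqrt_nonneg (μ (idx i))]
    have hvMv_ge : sval A k ^ 2 * ∑ i, c i ^ 2 ≤ v ⬝ᵥ ((Aᵀ * A) *ᵥ v) := by
      rw [hvMv, Finset.mul_sum]
      refine Finset.sum_le_sum fun i _ => ?_
      calc sval A k ^ 2 * c i ^ 2 ≤ μ (idx i) * c i ^ 2 :=
            mul_le_mul_of_nonneg_right (hμlow i) (sq_nonneg _)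
        _ = c i ^ 2 * μ (idx i) := by ring
    -- normalize
    set r : ℝ := Real.sqrt (∑ i, c i ^ 2) with hrdef
    have hr : 0 < r := Real.sqrt_pos.mpr hcpos
    have hr2 : r ^ 2 = ∑ i, c i ^ 2 := Real.sq_sqrt hcpos.le
    set u : Fin n → ℝ := r⁻¹ • v with hu
    have henu : enormR u = 1 := by
      rw [enormR]
      have h : ∑ jj, u jj ^ 2 = r⁻¹ ^ 2 * ∑ jj, v jj ^ 2 := by
        rw [Finset.mul_sum]
        refine Finset.sum_congr rfl fun jj _ => ?_
        simp [hu, mul_pow]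
      rw [h, hv2, ← hr2]
      rw [inv_pow, inv_mul_cancel₀ (by positivity)]
      exact Real.sqrt_one
    -- G u = A u
    have hGu : G.mulVec u = A.mulVec u := by
      funext i
      simp only [Matrix.mulVec, dotProduct]
      have h : ∀ j, G i j * u j = A i j * u j - ∑ a, p a i * (q a j * u j) := by
        intro j
        rw [hG i j, sub_mul, Finset.sum_mul]
        congr 1
        exact Finset.sum_congr rfl fun a _ => by ring
      calc ∑ j, G i j * u j = ∑ j, (A i j * u j - ∑ a, p a i * (q a j * u j)) :=
            Finset.sum_congr rfl fun j _ => h j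
        _ = (∑ j, A i j * u j) - ∑ j, ∑ a, p a i * (q a j * u j) := Finset.sum_sub_distrib _ _
        _ = ∑ j, A i j * u j := by
            rw [sub_eq_self, Finset.sum_comm]
            refine Finset.sum_eq_zero fun a _ => ?_
            have h2 : ∑ j, q a j * u j = 0 := by
              have h3 : ∑ j, q a j * u j = r⁻¹ * ∑ j, q a j * v j := by
                rw [Finset.mul_sum]
                refine Finset.sum_congr rfl fun j _ => ?_
                simp [hu]; ring
              rw [h3, hqv, mul_zero]
            calc ∑ j, p a i * (q a j * u j) = p a i * ∑ j, q a j * u j :=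
                  (Finset.mul_sum _ _ _).symm
              _ = 0 := by rw [h2, mul_zero]
    -- norm of A u
    have hn2 : enormR (A.mulVec u) ^ 2 = u ⬝ᵥ ((Aᵀ * A) *ᵥ u) := by
      rw [enormR_sq, ← Matrix.mulVec_mulVec, Matrix.dotProduct_mulVec,
        Matrix.vecMul_transpose]
      simp [dotProduct, sq]
    have huMu : u ⬝ᵥ ((Aᵀ * A) *ᵥ u) = r⁻¹ * r⁻¹ * (v ⬝ᵥ ((Aᵀ * A) *ᵥ v)) := by
      rw [hu, Matrix.mulVec_smul, smul_dotProduct, dotProduct_smul]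
      simp [smul_eq_mul]; ring
    have hfinal : sval A k ^ 2 ≤ enormR (A.mulVec u) ^ 2 := by
      rw [hn2, huMu]
      have h1 : r⁻¹ * r⁻¹ * (sval A k ^ 2 * ∑ i, c i ^ 2) ≤
          r⁻¹ * r⁻¹ * (v ⬝ᵥ ((Aᵀ * A) *ᵥ v)) := by
        apply mul_le_mul_of_nonneg_left hvMv_ge
        positivity
      have h2 : r⁻¹ * r⁻¹ * (sval A k ^ 2 * ∑ i, c i ^ 2) = sval A k ^ 2 := by
        have hrne : r ≠ 0 := ne_of_gt hr
        rw [← hr2, sq r, show r⁻¹ * r⁻¹ * (sval A k ^ 2 * (r * r)) =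
          (r⁻¹ * r) * ((r⁻¹ * r) * sval A k ^ 2) by ring,
          inv_mul_cancel₀ hrne]
        ring
      linarith
    have hle : sval A k ≤ enormR (A.mulVec u) := by
      nlinarith [enormR_nonneg (A.mulVec u), hs0]
    calc sval (Cnor C) k ≤ enormR (A.mulVec u) := hle
      _ = enormR (G.mulVec u) := by rw [hGu]
      _ ≤ specNormR G := le_specNormR G henu
  · rw [sval, dif_neg hk]
    exact specNormR_nonneg _


end Stmt17
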